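/- For every integer k ≥ 3, the optimal time horizon without intermediate storage, viewed as a function of the demand d_0 of commodity 0 on the cycle instance (with all other demands fixed at 1), is not continuous at d_0 = 1. Precisely: the infimum T*(d_0) of time horizons T over all feasible multi-commodity flows over time without intermediate storage for the modified instance I_k(d_0) satisfies T*(1) ≤ k, while T*(1+ε) ≥ 2k−2 for every ε > 0; since 2k−2 > k for k ≥ 3, the function T* is not right-continuous at d_0 = 1. -/

import Mathlib

open MeasureTheory Set

/-- A multi-commodity flow over time with time horizon `T` for the cycle instance with `k` nodes
`v_0, …, v_{k-1}`, arcs `a_j = (v_j, v_{(j+1) % k})` of unit capacity and unit transit time,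
`k` commodities where commodity `i` has source `v_i`, sink `v_{(i-1) % k}` and demand `d i`.
`f i j` is the flow rate function of commodity `i` into arc `a_j`. -/
def IsMCFlow (k : ℕ) (T : ℝ) (d : ℕ → ℝ) (f : ℕ → ℕ → ℝ → ℝ) : Prop :=
  -- positive time horizon
  0 < T ∧
  -- integrable flow rate functions
  (∀ i < k, ∀ j < k, Integrable (f i j)) ∧
  -- nonnegative flow rates
  (∀ i < k, ∀ j < k, ∀ θ : ℝ, 0 ≤ f i j θ) ∧
  -- flow rates vanish outside [0, T)
  (∀ i < k, ∀ j < k, ∀ θ : ℝ, θ ∉ Ico (0 : ℝ) T → f i j θ = 0) ∧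
  -- capacity constraints, for almost every time
  (∀ j < k, ∀ᵐ θ : ℝ, ∑ i ∈ Finset.range k, f i j θ ≤ 1) ∧
  -- weak flow conservation: flow can only emerge from the source `v_i` of commodity `i`;
  -- node `v_m` has unique incoming arc `a_{(m-1) % k}` and unique outgoing arc `a_m`
  (∀ i < k, ∀ m < k, m ≠ i → ∀ θ ∈ Ico (0 : ℝ) T,
    0 ≤ (∫ ξ in (0 : ℝ)..(θ - 1), f i ((m + k - 1) % k) ξ) -
        ∫ ξ in (0 : ℝ)..θ, f i m ξ) ∧
  -- demands are fulfilled at time `T`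
  (∀ i < k, ∀ m < k,
    (∫ ξ in (0 : ℝ)..(T - 1), f i ((m + k - 1) % k) ξ) -
        (∫ ξ in (0 : ℝ)..T, f i m ξ) =
      if m = (i + k - 1) % k then d i
      else if m = i then -d i
      else 0)

/-- The flow is without intermediate storage: flow conservation holds with equality at every
node other than the source `v_i` and the sink `v_{(i-1) % k}` of each commodity `i`. -/
def NoStorage (k : ℕ) (T : ℝ) (f : ℕ → ℕ → ℝ → ℝ) : Prop :=
  ∀ i < k, ∀ m < k, m ≠ i → m ≠ (i + k - 1) % k → ∀ θ ∈ Ico (0 : ℝ) T,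
    (∫ ξ in (0 : ℝ)..(θ - 1), f i ((m + k - 1) % k) ξ) =
      ∫ ξ in (0 : ℝ)..θ, f i m ξ

/-- The demands of the instance `I_k`: commodity `0` has demand `2`,
all other commodities have demand `1`. -/
noncomputable def demandI (i : ℕ) : ℝ := if i = 0 then 2 else 1

/-- `Tstar k d₀` is the infimum of all time horizons `T` for which the modified cycle instance
`I_k(d₀)` (commodity `0` has demand `d₀`, all other commodities have demand `1`) admits a
multi-commodity flow over time without intermediate storage. -/
noncomputable def Tstar (k : ℕ) (d₀ : ℝ) : ℝ :=
  sInf {T : ℝ | ∃ f : ℕ → ℕ → ℝ → ℝ,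
    IsMCFlow k T (fun i => if i = 0 then d₀ else 1) f ∧ NoStorage k T f}

lemma modk (k a : ℕ) (h : a < 2*k) : a % k = if a < k then a else a - k := by
  split_ifs with h1
  · exact Nat.mod_eq_of_lt h1
  · rw [Nat.mod_eq_sub_mod (le_of_not_gt h1), Nat.mod_eq_of_lt (by omega)]

lemma ind_ae (a b : ℝ) : (Ico a b).indicator (fun _ => (1:ℝ)) =ᵐ[volume] (Ioc a b).indicator (fun _ => (1:ℝ)) :=
  indicator_ae_eq_of_ae_eq_set Ico_ae_eq_Ioc

lemma integral_ind (a b x : ℝ) (h0 : 0 ≤ a) (hab : a ≤ b) :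
    ∫ ξ in (0:ℝ)..x, (Ico a b).indicator (fun _ => (1:ℝ)) ξ = max 0 (x - a) - max 0 (x - b) := by
  have key : ∀ u v : ℝ, u ≤ v → ∫ ξ in u..v, (Ico a b).indicator (fun _ => (1:ℝ)) ξ
      = max (min b v - max a u) 0 := by
    intro u v huv
    rw [intervalIntegral.integral_of_le huv,
      MeasureTheory.setIntegral_congr_ae measurableSet_Ioc
        ((ind_ae a b).mono (fun x hx _ => hx)),
      ← MeasureTheory.integral_indicator measurableSet_Ioc]
    rw [Set.indicator_indicator, Set.Ioc_inter_Ioc]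
    rw [MeasureTheory.integral_indicator (measurableSet_Ioc), MeasureTheory.setIntegral_const]
    rw [Real.volume_real_Ioc, smul_eq_mul, mul_one, max_comm a u, min_comm v b]
  rcases le_total 0 x with hx | hx
  · rw [key 0 x hx, max_eq_left h0]
    rcases le_total x a with h1 | h1 <;> rcases le_total x b with h2 | h2 <;>
      simp [min_def, max_def] <;> split_ifs <;> linarith
  · rw [intervalIntegral.integral_symm, key x 0 hx]
    have h1 : min b 0 - max a x ≤ 0 := by
      rcases le_total a x with h | h <;> rcases le_total b 0 with h' | h' <;>
        simp [min_def, max_def] <;> split_ifs <;> linarith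
    rw [max_eq_right h1]
    have h2 : max 0 (x - a) = 0 := max_eq_left (by linarith)
    have h3 : max 0 (x - b) = 0 := max_eq_left (by linarith)
    rw [h2, h3]; ring

lemma ind_integrable (a b : ℝ) : Integrable ((Ico a b).indicator (fun _ => (1:ℝ))) := by
  rw [integrable_indicator_iff measurableSet_Ico]
  exact integrableOn_const (by rw [Real.volume_Ico]; exact ENNReal.ofReal_ne_top)

lemma ind_le_one (s : Set ℝ) (θ : ℝ) : s.indicator (fun _ => (1:ℝ)) θ ≤ 1 := by
  by_cases h : θ ∈ s <;> simp [Set.indicator_of_mem, Set.indicator_of_notMem, h]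

lemma ind_nonneg (s : Set ℝ) (θ : ℝ) : 0 ≤ s.indicator (fun _ => (1:ℝ)) θ :=
  Set.indicator_nonneg (fun _ _ => zero_le_one) _

lemma clamp_nonneg (a b x : ℝ) (h : a ≤ b) : 0 ≤ max 0 (x - a) - max 0 (x - b) :=
  sub_nonneg.2 (max_le_max le_rfl (by linarith))

lemma clamp_full (a b x : ℝ) (ha : a ≤ b) (h : b ≤ x) : max 0 (x - a) - max 0 (x - b) = b - a := by
  rw [max_eq_right (by linarith), max_eq_right (by linarith)]; ring

noncomputable def wv (k : ℕ) (e : ℝ) (i j : ℕ) : ℝ → ℝ := fun θ =>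
  (if (j + k - i) % k + 2 ≤ k then
    (Ico (((j + k - i) % k : ℕ) : ℝ) ((((j + k - i) % k : ℕ) : ℝ) + 1)).indicator (fun _ => (1:ℝ)) θ
   else 0)
  + (if i = 0 ∧ j + 2 ≤ k then
    (Ico ((k:ℝ) - 1 + j) ((k:ℝ) - 1 + j + e)).indicator (fun _ => (1:ℝ)) θ else 0)

lemma wv_integrable (k : ℕ) (e : ℝ) (i j : ℕ) : Integrable (wv k e i j) := by
  unfold wv
  apply Integrable.add <;> split_ifs <;>
    first | exact ind_integrable _ _ | exact integrable_zero _ _ _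

lemma wv_nonneg (k : ℕ) (e : ℝ) (i j : ℕ) (θ : ℝ) : 0 ≤ wv k e i j θ := by
  unfold wv
  apply add_nonneg <;> split_ifs <;> first | exact ind_nonneg _ _ | exact le_refl 0

lemma wv_int (k : ℕ) (hk : 1 ≤ k) (e : ℝ) (he : 0 ≤ e) (i j : ℕ) (θ : ℝ) :
    ∫ ξ in (0:ℝ)..θ, wv k e i j ξ =
      (if (j + k - i) % k + 2 ≤ k then
        max 0 (θ - (((j + k - i) % k : ℕ) : ℝ)) - max 0 (θ - ((((j + k - i) % k : ℕ) : ℝ) + 1))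
       else 0)
      + (if i = 0 ∧ j + 2 ≤ k then
        max 0 (θ - ((k:ℝ) - 1 + j)) - max 0 (θ - ((k:ℝ) - 1 + j + e)) else 0) := by
  unfold wv
  rw [intervalIntegral.integral_add]
  · congr 1 <;> split_ifs
    · exact integral_ind _ _ _ (by positivity) (by linarith)
    · simp
    · refine integral_ind _ _ _ ?_ (by linarith)
      have h1 : (1:ℝ) ≤ (k:ℝ) := by exact_mod_cast hk
      have h2 : (0:ℝ) ≤ (j:ℕ) := by positivity
      linarith
    · simp
  · split_ifs
    · exact (ind_integrable _ _).intervalIntegrable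
    · exact intervalIntegrable_const
  · split_ifs
    · exact (ind_integrable _ _).intervalIntegrable
    · exact intervalIntegrable_const

lemma wv_nostorage (k : ℕ) (hk : 3 ≤ k) (e : ℝ) (he : 0 ≤ e) (T : ℝ) :
    NoStorage k T (wv k e) := by
  intro i hi m hm hmi hms θ hθ
  have hs : (i + k - 1) % k = if i = 0 then k - 1 else i - 1 := by
    rw [modk k _ (by omega)]; split_ifs <;> omega
  rw [hs] at hms
  have hl' : (m + k - i) % k = if i ≤ m then m - i else m + k - i := by
    rw [modk k _ (by omega)]; split_ifs <;> omega
  have hj : (m + k - 1) % k = if m = 0 then k - 1 else m - 1 := by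
    rw [modk k _ (by omega)]; split_ifs <;> omega
  have h1 : 1 ≤ (m + k - i) % k ∧ (m + k - i) % k + 2 ≤ k := by
    rw [hl']; split_ifs at hms ⊢ <;> omega
  have h2 : ((m + k - 1) % k + k - i) % k + 1 = (m + k - i) % k := by
    rw [hj, hl']
    by_cases hm0 : m = 0
    · subst hm0
      rw [if_pos rfl, modk k _ (by omega)]
      split_ifs at hms ⊢ <;> omega
    · rw [if_neg hm0, modk k _ (by omega)]
      split_ifs at hms ⊢ <;> omega
  rw [wv_int k (by omega) e he, wv_int k (by omega) e he]
  set L := ((m + k - 1) % k + k - i) % k with hL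
  set l' := (m + k - i) % k with hl2
  have hcL : (L : ℝ) + 1 = (l' : ℝ) := by exact_mod_cast h2
  rw [if_pos (show L + 2 ≤ k by omega), if_pos (show l' + 2 ≤ k by omega)]
  have c1 : θ - 1 - (L : ℝ) = θ - (l' : ℝ) := by linarith
  have c2 : θ - 1 - ((L : ℝ) + 1) = θ - ((l' : ℝ) + 1) := by linarith
  rw [c1, c2]
  by_cases hi0 : i = 0
  · subst hi0
    have hml : l' = m := by rw [hl']; split_ifs <;> omega
    have hm1 : 1 ≤ m ∧ m + 2 ≤ k := by omega
    have hjm : (m + k - 1) % k = m - 1 := by rw [hj, if_neg (by omega)]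
    rw [if_pos (⟨rfl, by omega⟩ : (0:ℕ) = 0 ∧ (m + k - 1) % k + 2 ≤ k),
        if_pos (⟨rfl, by omega⟩ : (0:ℕ) = 0 ∧ m + 2 ≤ k)]
    have hcast : (((m + k - 1) % k : ℕ) : ℝ) = (m : ℝ) - 1 := by
      rw [hjm]; push_cast [Nat.cast_sub (by omega : 1 ≤ m)]; ring
    rw [hcast]
    have c3 : θ - 1 - ((k:ℝ) - 1 + ((m:ℝ) - 1)) = θ - ((k:ℝ) - 1 + (m:ℝ)) := by ring
    have c4 : θ - 1 - ((k:ℝ) - 1 + ((m:ℝ) - 1) + e) = θ - ((k:ℝ) - 1 + (m:ℝ) + e) := by ring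
    rw [c3, c4]
  · rw [if_neg (fun h => hi0 h.1), if_neg (fun h => hi0 h.1)]

lemma wv_capacity (k : ℕ) (hk : 3 ≤ k) (e : ℝ) (he : 0 ≤ e) (j : ℕ) (hj : j < k) (θ : ℝ) :
    ∑ i ∈ Finset.range k, wv k e i j θ ≤ 1 := by
  have w2zero : θ < (k:ℝ) - 1 + j → ∀ i : ℕ,
      (if i = 0 ∧ j + 2 ≤ k then
        (Ico ((k:ℝ) - 1 + j) ((k:ℝ) - 1 + j + e)).indicator (fun _ => (1:ℝ)) θ else 0) = 0 := by
    intro hc i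
    split_ifs with h
    · exact Set.indicator_of_notMem (fun hmem => absurd hmem.1 (not_le.2 hc)) _
    · rfl
  rcases lt_or_ge θ 0 with hθ | hθ
  · have : ∀ i ∈ Finset.range k, wv k e i j θ = 0 := by
      intro i _
      unfold wv
      rw [w2zero (by
        have hj0 : (0:ℝ) ≤ (j:ℕ) := by positivity
        have hk0 : (3:ℝ) ≤ (k:ℕ) := by exact_mod_cast hk
        linarith), add_zero]
      split_ifs with h
      · exact Set.indicator_of_notMem (fun hmem => absurd hmem.1 (by push_neg; exact lt_of_lt_of_le hθ (by positivity))) _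
      · rfl
    rw [Finset.sum_eq_zero this]; norm_num
  · set n := ⌊θ⌋₊ with hn
    have hn1 : (n:ℝ) ≤ θ := Nat.floor_le hθ
    have hn2 : θ < (n:ℝ) + 1 := Nat.lt_floor_add_one θ
    rcases lt_or_ge θ ((k:ℝ) - 1) with hcase | hcase
    · -- θ < k-1 : only wave-1 term of commodity i₀ possibly nonzero
      have hnk : n + 2 ≤ k := by
        have : (n:ℝ) + 1 < (k:ℝ) := by linarith
        have : n + 1 < k := by exact_mod_cast this
        omega
      rw [Finset.sum_eq_single ((j + k - n) % k)]
      · unfold wv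
        have hb : (k:ℝ) - 1 + (j:ℕ) ≥ (k:ℝ) - 1 := by
          have : (0:ℝ) ≤ (j:ℕ) := by positivity
          linarith
        rw [w2zero (by linarith), add_zero]
        split_ifs with h
        · exact ind_le_one _ _
        · norm_num
      · intro i hir hine
        unfold wv
        rw [w2zero (by
          have : (0:ℝ) ≤ (j:ℕ) := by positivity
          linarith), add_zero]
        split_ifs with h
        · refine Set.indicator_of_notMem (fun hmem => hine ?_) _
          obtain ⟨h1, h2⟩ := hmem
          have hlk : (j + k - i) % k = n := by
            have hup : (((j + k - i) % k : ℕ) : ℝ) < (n:ℝ) + 1 := lt_of_le_of_lt h1 hn2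
            have hdo : (n:ℝ) < (((j + k - i) % k : ℕ) : ℝ) + 1 := lt_of_le_of_lt hn1 h2
            have hup' : (j + k - i) % k < n + 1 := by exact_mod_cast hup
            have hdo' : n < (j + k - i) % k + 1 := by exact_mod_cast hdo
            omega
          have hik : i < k := Finset.mem_range.1 hir
          rw [modk k _ (by omega)] at hlk
          rw [modk k _ (by omega)]
          split_ifs at hlk ⊢ <;> omega
        · rfl
      · intro hnot
        exact absurd (Finset.mem_range.2 (Nat.mod_lt _ (by omega))) hnot
    · -- θ ≥ k-1 : wave-1 terms vanish, only commodity 0's wave-2 term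
      have w1zero : ∀ i : ℕ,
          (if (j + k - i) % k + 2 ≤ k then
            (Ico (((j + k - i) % k : ℕ) : ℝ) ((((j + k - i) % k : ℕ) : ℝ) + 1)).indicator
              (fun _ => (1:ℝ)) θ else 0) = 0 := by
        intro i
        split_ifs with h
        · refine Set.indicator_of_notMem (fun hmem => ?_) _
          obtain ⟨h1, h2⟩ := hmem
          have hcc := (Nat.cast_le (α := ℝ)).2 h
          rw [Nat.cast_add, Nat.cast_ofNat] at hcc
          linarith
        · rfl
      rw [Finset.sum_eq_single 0]
      · unfold wv
        rw [w1zero, zero_add]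
        split_ifs with h
        · exact ind_le_one _ _
        · norm_num
      · intro i hir hine
        unfold wv
        rw [w1zero, zero_add, if_neg (fun h => hine h.1)]
      · intro hnot
        exact absurd (Finset.mem_range.2 (by omega)) hnot

lemma wv_vanish (k : ℕ) (hk : 3 ≤ k) (e T : ℝ) (he : 0 ≤ e) (hT1 : (k:ℝ) ≤ T)
    (hT2 : e = 0 ∨ 2*(k:ℝ) - 2 + e ≤ T) (i j : ℕ) (hj : j < k) (θ : ℝ)
    (hθ : θ ∉ Ico (0:ℝ) T) : wv k e i j θ = 0 := by
  have h' : θ < 0 ∨ T ≤ θ := by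
    by_contra hc
    push_neg at hc
    exact hθ ⟨hc.1, hc.2⟩
  unfold wv
  have hz1 : (if (j + k - i) % k + 2 ≤ k then
      (Ico (((j + k - i) % k : ℕ) : ℝ) ((((j + k - i) % k : ℕ) : ℝ) + 1)).indicator
        (fun _ => (1:ℝ)) θ else 0) = 0 := by
    split_ifs with h
    · refine Set.indicator_of_notMem (fun hmem => ?_) _
      obtain ⟨h1, h2⟩ := hmem
      have hcc := (Nat.cast_le (α := ℝ)).2 h
      rw [Nat.cast_add, Nat.cast_ofNat] at hcc
      have h0 : (0:ℝ) ≤ (((j + k - i) % k : ℕ) : ℝ) := by positivity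
      rcases h' with h' | h' <;> linarith
    · rfl
  have hz2 : (if i = 0 ∧ j + 2 ≤ k then
      (Ico ((k:ℝ) - 1 + j) ((k:ℝ) - 1 + j + e)).indicator (fun _ => (1:ℝ)) θ else 0) = 0 := by
    split_ifs with h
    · refine Set.indicator_of_notMem (fun hmem => ?_) _
      obtain ⟨h1, h2⟩ := hmem
      have hjc : (j:ℝ) + 2 ≤ (k:ℝ) := by exact_mod_cast h.2
      have h0 : (0:ℝ) ≤ (j:ℕ) := by positivity
      rcases hT2 with rfl | hT2
      · linarith
      · rcases h' with h' | h' <;> linarith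
    · rfl
  rw [hz1, hz2, add_zero]
lemma wv_demand (k : ℕ) (hk : 3 ≤ k) (e T : ℝ) (he : 0 ≤ e) (hT1 : (k:ℝ) ≤ T)
    (hT2 : e = 0 ∨ 2*(k:ℝ) - 2 + e ≤ T) (i : ℕ) (hi : i < k) (m : ℕ) (hm : m < k) :
    (∫ ξ in (0:ℝ)..(T-1), wv k e i ((m + k - 1) % k) ξ) - (∫ ξ in (0:ℝ)..T, wv k e i m ξ) =
      if m = (i + k - 1) % k then (if i = 0 then 1 + e else 1)
      else if m = i then -(if i = 0 then 1 + e else 1)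
      else 0 := by
  have hkR : (3:ℝ) ≤ (k:ℕ) := by exact_mod_cast hk
  have ck1 : ((k-1:ℕ):ℝ) = (k:ℝ) - 1 := by rw [Nat.cast_sub (by omega)]; norm_num
  have ck2 : ((k-2:ℕ):ℝ) = (k:ℝ) - 2 := by rw [Nat.cast_sub (by omega)]; norm_num
  have hs : (i + k - 1) % k = if i = 0 then k - 1 else i - 1 := by
    rw [modk k _ (by omega)]; split_ifs <;> omega
  rw [wv_int k (by omega) e he, wv_int k (by omega) e he]
  by_cases hms : m = (i + k - 1) % k
  · -- m is the sink of commodity i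
    rw [if_pos hms]
    have hmval : m = if i = 0 then k - 1 else i - 1 := by rw [hms, hs]
    have hl'v : (m + k - i) % k = k - 1 := by
      rw [hmval]; split_ifs with h <;> rw [modk k _ (by omega)] <;> split_ifs <;> omega
    have hL : ((m + k - 1) % k + k - i) % k = k - 2 := by
      rw [hmval]
      split_ifs with h
      · rw [modk k (k - 1 + k - 1) (by omega)]
        split_ifs with h2 <;> rw [modk k _ (by omega)] <;> split_ifs <;> omega
      · rw [modk k (i - 1 + k - 1) (by omega)]
        split_ifs with h2 <;> rw [modk k _ (by omega)] <;> split_ifs <;> omega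
    rw [hl'v, hL, if_pos (show k - 2 + 2 ≤ k by omega),
      if_neg (show ¬(k - 1 + 2 ≤ k) by omega)]
    have hC2 : ¬(i = 0 ∧ m + 2 ≤ k) := by
      rintro ⟨rfl, hx⟩
      rw [if_pos rfl] at hmval; omega
    rw [if_neg hC2, ck2]
    have hw1 : max 0 (T - 1 - ((k:ℝ) - 2)) - max 0 (T - 1 - ((k:ℝ) - 2 + 1)) = 1 := by
      rw [clamp_full _ _ _ (by linarith) (by linarith)]; ring
    by_cases hi0 : i = 0
    · have hj₀ : (m + k - 1) % k = k - 2 := by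
        rw [hmval, if_pos hi0, modk k _ (by omega)]; split_ifs <;> omega
      rw [if_pos (⟨hi0, by omega⟩ : i = 0 ∧ (m + k - 1) % k + 2 ≤ k), hj₀, ck2, if_pos hi0]
      rcases hT2 with rfl | hT2
      · simp only [add_zero, sub_self]
        rw [hw1]; norm_num
      · rw [hw1, clamp_full _ _ _ (by linarith) (by linarith)]; ring
    · rw [if_neg (fun h => hi0 h.1), if_neg hi0, hw1]; ring
  · rw [if_neg hms]
    by_cases hmi : m = i
    · -- m is the source of commodity i
      subst hmi
      rw [if_pos rfl]
      have hl0 : (m + k - m) % k = 0 := by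
        rw [modk k _ (by omega)]; split_ifs <;> omega
      have hL : ((m + k - 1) % k + k - m) % k = k - 1 := by
        rw [hs] at hms
        rw [modk k (m + k - 1) (by omega)]
        split_ifs with h2 <;> rw [modk k _ (by omega)] <;> split_ifs at hms ⊢ <;> omega
      have hC1 : ¬(m = 0 ∧ (m + k - 1) % k + 2 ≤ k) := by
        rintro ⟨rfl, hx⟩
        rw [modk k _ (by omega)] at hx
        split_ifs at hx <;> omega
      rw [hl0, hL, if_neg (by omega), if_pos (show 0 + 2 ≤ k by omega), if_neg hC1]
      have hw1 : max 0 (T - ((0:ℕ):ℝ)) - max 0 (T - (((0:ℕ):ℝ) + 1)) = 1 := by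
        rw [Nat.cast_zero, clamp_full _ _ _ (by linarith) (by linarith)]; ring
      by_cases hi0 : m = 0
      · rw [if_pos (⟨hi0, by omega⟩ : m = 0 ∧ m + 2 ≤ k), if_pos hi0, hi0]
        rcases hT2 with rfl | hT2
        · simp only [add_zero, sub_self]
          rw [hw1]; norm_num
        · rw [hw1, Nat.cast_zero,
            clamp_full _ _ _ (by linarith) (by linarith)]
          ring
      · rw [if_neg (fun h => hi0 h.1), if_neg hi0, hw1]; ring
    · -- m is an intermediate node for commodity i
      rw [if_neg hmi]
      rw [hs] at hms
      have hl' : (m + k - i) % k = if i ≤ m then m - i else m + k - i := by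
        rw [modk k _ (by omega)]; split_ifs <;> omega
      have h1 : 1 ≤ (m + k - i) % k ∧ (m + k - i) % k + 2 ≤ k := by
        rw [hl']; split_ifs at hms ⊢ <;> omega
      have h2 : ((m + k - 1) % k + k - i) % k + 1 = (m + k - i) % k := by
        rw [hl', modk k (m + k - 1) (by omega)]
        split_ifs with ha <;> rw [modk k _ (by omega)] <;> split_ifs at hms ⊢ <;> omega
      set L := ((m + k - 1) % k + k - i) % k with hLdef
      set l' := (m + k - i) % k with hl2
      have hcL : (L : ℝ) + 1 = (l' : ℝ) := by exact_mod_cast h2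
      have hcl'2 : (l' : ℝ) + 2 ≤ (k:ℝ) := by exact_mod_cast h1.2
      rw [if_pos (show L + 2 ≤ k by omega), if_pos (show l' + 2 ≤ k by omega)]
      have hw1L : max 0 (T - 1 - (L:ℝ)) - max 0 (T - 1 - ((L:ℝ) + 1)) = 1 := by
        rw [clamp_full _ _ _ (by linarith) (by linarith)]; ring
      have hw1l' : max 0 (T - (l':ℝ)) - max 0 (T - ((l':ℝ) + 1)) = 1 := by
        rw [clamp_full _ _ _ (by linarith) (by linarith)]; ring
      by_cases hi0 : i = 0
      · have hml : l' = m := by rw [hl2, modk k _ (by omega)]; split_ifs <;> omega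
        have hm12 : 1 ≤ m ∧ m + 2 ≤ k := by omega
        have hj₀ : (m + k - 1) % k = m - 1 := by
          rw [modk k _ (by omega)]; split_ifs <;> omega
        have hcm1 : ((m-1:ℕ):ℝ) = (m:ℝ) - 1 := by
          rw [Nat.cast_sub (by omega)]; norm_num
        have hcm : (m:ℝ) + 2 ≤ (k:ℝ) := by exact_mod_cast hm12.2
        rw [if_pos (⟨hi0, by omega⟩ : i = 0 ∧ (m + k - 1) % k + 2 ≤ k),
            if_pos (⟨hi0, by omega⟩ : i = 0 ∧ m + 2 ≤ k), hj₀, hcm1]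
        rcases hT2 with rfl | hT2
        · simp only [add_zero, sub_self]
          rw [hw1L, hw1l']; norm_num
        · rw [hw1L, hw1l', clamp_full _ _ _ (by linarith) (by linarith),
            clamp_full _ _ _ (by linarith) (by linarith)]
          ring
      · rw [if_neg (fun h => hi0 h.1), if_neg (fun h => hi0 h.1), hw1L, hw1l']; ring
set_option maxHeartbeats 1000000 in
lemma lower_bound (k : ℕ) (hk : 3 ≤ k) (ε : ℝ) (hε : 0 < ε) (T : ℝ) (f : ℕ → ℕ → ℝ → ℝ)
    (hf : IsMCFlow k T (fun i => if i = 0 then 1 + ε else 1) f) (hns : NoStorage k T f) :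
    2 * (k:ℝ) - 2 ≤ T := by
  obtain ⟨hT0, hInt, hNN, hVan, hCap, _, hDem⟩ := hf
  have hkR : (3:ℝ) ≤ (k:ℕ) := by exact_mod_cast hk
  by_contra hcon
  push_neg at hcon
  set G : ℕ → ℕ → ℝ → ℝ := fun i j θ => ∫ ξ in (0:ℝ)..θ, f i j ξ with hGdef
  -- (A) vanishing for θ ≤ 0
  have hA : ∀ i < k, ∀ j < k, ∀ θ : ℝ, θ ≤ 0 → G i j θ = 0 := by
    intro i hi j hj θ hθ
    have h0 : ∀ᵐ x : ℝ, x ∉ ({0} : Set ℝ) := (Set.countable_singleton 0).ae_notMem _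
    have : G i j θ = ∫ ξ in (0:ℝ)..θ, (0:ℝ) := by
      apply intervalIntegral.integral_congr_ae
      filter_upwards [h0] with x hx hmem
      apply hVan i hi j hj
      rw [Set.uIoc_of_ge hθ] at hmem
      rintro ⟨hx0, _⟩
      rcases lt_or_eq_of_le hx0 with h' | h'
      · exact absurd hmem.2 (not_le.2 h')
      · exact hx (by simp [← h'])
    rw [this, intervalIntegral.integral_zero]
  -- (B) increments
  have hB : ∀ i < k, ∀ j < k, ∀ a b : ℝ, G i j b - G i j a = ∫ ξ in a..b, f i j ξ := by
    intro i hi j hj a b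
    have h1 : IntervalIntegrable (f i j) volume 0 a := (hInt i hi j hj).intervalIntegrable
    have h2 : IntervalIntegrable (f i j) volume a b := (hInt i hi j hj).intervalIntegrable
    have := intervalIntegral.integral_add_adjacent_intervals h1 h2
    simp only [hGdef]
    linarith [this]
  -- (C) monotone
  have hC : ∀ i < k, ∀ j < k, ∀ a b : ℝ, a ≤ b → G i j a ≤ G i j b := by
    intro i hi j hj a b hab
    have h := hB i hi j hj a b
    have h2 : 0 ≤ ∫ ξ in a..b, f i j ξ :=
      intervalIntegral.integral_nonneg hab (fun x _ => hNN i hi j hj x)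
    linarith
  -- (D) conservation relation for all θ ≤ T
  have hD : ∀ i < k, ∀ m < k, m ≠ i → m ≠ (i + k - 1) % k → ∀ θ : ℝ, θ ≤ T →
      G i ((m + k - 1) % k) (θ - 1) = G i m θ := by
    intro i hi m hm hmi hms θ hθ
    rcases lt_or_ge θ 0 with h0 | h0
    · rw [hA i hi _ (Nat.mod_lt _ (by omega)) _ (by linarith),
        hA i hi m hm θ (by linarith)]
    · rcases eq_or_lt_of_le hθ with rfl | hθ'
      · have := hDem i hi m hm
        rw [if_neg hms, if_neg hmi] at this
        simp only [hGdef]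
        linarith
      · exact hns i hi m hm hmi hms θ ⟨h0, hθ'⟩
  -- (E) path relation
  have hE : ∀ i < k, ∀ l : ℕ, l + 2 ≤ k → ∀ θ : ℝ, θ ≤ T →
      G i ((i + l) % k) θ = G i i (θ - l) := by
    intro i hi l
    induction l with
    | zero =>
      intro _ θ _
      rw [Nat.add_zero, Nat.mod_eq_of_lt hi, Nat.cast_zero, sub_zero]
    | succ l ih =>
      intro hl θ hθ
      have hm : (i + (l + 1)) % k < k := Nat.mod_lt _ (by omega)
      have hval : (i + (l + 1)) % k = if i + l + 1 < k then i + l + 1 else i + l + 1 - k := by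
        rw [← Nat.add_assoc, modk k _ (by omega)]
      have hmi : (i + (l + 1)) % k ≠ i := by rw [hval]; split_ifs <;> omega
      have hsink : (i + k - 1) % k = if i = 0 then k - 1 else i - 1 := by
        rw [modk k _ (by omega)]; split_ifs <;> omega
      have hms : (i + (l + 1)) % k ≠ (i + k - 1) % k := by
        rw [hval, hsink]; split_ifs <;> omega
      have hpred : ((i + (l + 1)) % k + k - 1) % k = (i + l) % k := by
        rw [hval, modk k (i + l) (by omega)]
        split_ifs with h1 <;> rw [modk k _ (by omega)] <;> split_ifs <;> omega
      have step := hD i hi _ hm hmi hms θ hθ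
      rw [hpred] at step
      rw [← step, ih (by omega) (θ - 1) (by linarith)]
      congr 1
      push_cast
      ring
  -- (F) arrival of demands
  have hF : ∀ i < k, (if i = 0 then 1 + ε else 1 : ℝ) ≤ G i i (T - ((k:ℝ) - 1)) := by
    intro i hi
    have hsk : (i + k - 1) % k < k := Nat.mod_lt _ (by omega)
    have hdem := hDem i hi _ hsk
    rw [if_pos rfl] at hdem
    have hss : ((i + k - 1) % k + k - 1) % k = (i + (k - 2)) % k := by
      rw [modk k (i + k - 1) (by omega), modk k (i + (k-2)) (by omega)]
      split_ifs with h1 <;> rw [modk k _ (by omega)] <;> split_ifs <;> omega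
    have hsnk0 : G i ((i + k - 1) % k) 0 = 0 := hA i hi _ hsk 0 le_rfl
    have hmono := hC i hi _ hsk 0 T (le_of_lt hT0)
    have hpath := hE i hi (k - 2) (by omega) (T - 1) (by linarith)
    rw [hss] at hdem
    have hdem2 : G i ((i + (k - 2)) % k) (T - 1) - G i ((i + k - 1) % k) T =
        (if i = 0 then 1 + ε else 1) := by
      simp only [hGdef]
      simpa using hdem
    rw [hpath] at hdem2
    have hcast : ((k - 2 : ℕ) : ℝ) = (k:ℝ) - 2 := by
      rw [Nat.cast_sub (by omega)]; norm_num
    rw [hcast] at hdem2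
    have hTT : T - 1 - ((k:ℝ) - 2) = T - ((k:ℝ) - 1) := by ring
    rw [hTT] at hdem2
    linarith
  -- (G) integrated capacity
  have hG : ∀ j < k, ∀ a b : ℝ, a ≤ b →
      ∑ i ∈ Finset.range k, (G i j b - G i j a) ≤ b - a := by
    intro j hj a b hab
    have hrw : ∀ i ∈ Finset.range k, G i j b - G i j a = ∫ ξ in a..b, f i j ξ :=
      fun i hi => hB i (Finset.mem_range.1 hi) j hj a b
    have hsum_int : IntervalIntegrable (fun θ => ∑ i ∈ Finset.range k, f i j θ) volume a b :=
      (MeasureTheory.integrable_finset_sum _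
        (fun i hi => hInt i (Finset.mem_range.1 hi) j hj)).intervalIntegrable
    have hmono := intervalIntegral.integral_mono_ae hab hsum_int intervalIntegrable_const
      (by filter_upwards [hCap j hj] with θ h; exact h :
        (fun θ => ∑ i ∈ Finset.range k, f i j θ) ≤ᵐ[volume] fun _ => (1:ℝ))
    rw [intervalIntegral.integral_const, smul_eq_mul, mul_one] at hmono
    rw [Finset.sum_congr rfl hrw, ← intervalIntegral.integral_finset_sum
        (fun i hi => (hInt i (Finset.mem_range.1 hi) j hj).intervalIntegrable)]
    exact hmono
  -- final contradiction
  set S : ℝ := T - ((k:ℝ) - 1) with hSdef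
  have key : ∀ i < k, (if i = 0 then 1 + ε else 1 : ℝ) ≤
      ∑ j ∈ Finset.range k, (G i j S - G i j (S - 1)) := by
    intro i hi
    have hreindex : ∑ j ∈ Finset.range k, (G i j S - G i j (S - 1)) =
        ∑ l ∈ Finset.range k, (G i ((i + l) % k) S - G i ((i + l) % k) (S - 1)) := by
      apply Finset.sum_nbij' (fun j => (j + k - i) % k) (fun l => (i + l) % k)
      · intro a ha; exact Finset.mem_range.2 (Nat.mod_lt _ (by omega))
      · intro a ha; exact Finset.mem_range.2 (Nat.mod_lt _ (by omega))
      · intro a ha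
        have := Finset.mem_range.1 ha
        rw [modk k (a + k - i) (by omega)]
        split_ifs with h1 <;> rw [modk k _ (by omega)] <;> split_ifs <;> omega
      · intro a ha
        have := Finset.mem_range.1 ha
        rw [modk k (i + a) (by omega)]
        split_ifs with h1 <;> rw [modk k _ (by omega)] <;> split_ifs <;> omega
      · intro a ha
        have := Finset.mem_range.1 ha
        congr 2 <;> · rw [modk k (a + k - i) (by omega)]
                      split_ifs with h1 <;> rw [modk k _ (by omega)] <;> split_ifs <;> omega
    rw [hreindex]
    have hksplit : k = (k - 1) + 1 := by omega
    rw [hksplit, Finset.sum_range_succ, ← hksplit]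
    have hlast : 0 ≤ G i ((i + (k-1)) % k) S - G i ((i + (k-1)) % k) (S - 1) := by
      have := hC i hi ((i + (k-1)) % k) (Nat.mod_lt _ (by omega)) (S - 1) S (by linarith)
      linarith
    have hmid : ∑ l ∈ Finset.range (k - 1), (G i ((i + l) % k) S - G i ((i + l) % k) (S - 1)) =
        G i i S - G i i (S - ((k:ℝ) - 1)) := by
      have hterm : ∀ l ∈ Finset.range (k - 1),
          G i ((i + l) % k) S - G i ((i + l) % k) (S - 1) =
            (fun n : ℕ => G i i (S - n)) l - (fun n : ℕ => G i i (S - n)) (l + 1) := by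
        intro l hl
        have hlk : l + 2 ≤ k := by have := Finset.mem_range.1 hl; omega
        have hS1 : S ≤ T := by simp only [hSdef]; linarith
        rw [hE i hi l hlk S hS1, hE i hi l hlk (S - 1) (by linarith)]
        simp only
        congr 2
        push_cast
        ring
      rw [Finset.sum_congr rfl hterm, Finset.sum_range_sub' (fun n : ℕ => G i i (S - n))]
      simp only [Nat.cast_zero, sub_zero]
      congr 2
      rw [Nat.cast_sub (by omega)]
      norm_num
    rw [hmid] at *
    have hzero : G i i (S - ((k:ℝ) - 1)) = 0 := by
      apply hA i hi i hi
      simp only [hSdef]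
      linarith
    rw [hzero]
    have := hF i hi
    linarith
  have hsum1 : ∑ i ∈ Finset.range k, (if i = 0 then 1 + ε else 1 : ℝ) ≤
      ∑ i ∈ Finset.range k, ∑ j ∈ Finset.range k, (G i j S - G i j (S - 1)) :=
    Finset.sum_le_sum (fun i hi => key i (Finset.mem_range.1 hi))
  have hsum2 : ∑ i ∈ Finset.range k, ∑ j ∈ Finset.range k, (G i j S - G i j (S - 1)) ≤ k := by
    rw [Finset.sum_comm]
    calc ∑ j ∈ Finset.range k, ∑ i ∈ Finset.range k, (G i j S - G i j (S - 1))
        ≤ ∑ j ∈ Finset.range k, (S - (S - 1)) :=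
          Finset.sum_le_sum (fun j hj => hG j (Finset.mem_range.1 hj) (S-1) S (by linarith))
      _ = k := by rw [Finset.sum_const, Finset.card_range, nsmul_eq_mul]; ring
  have hsum3 : ∑ i ∈ Finset.range k, (if i = 0 then 1 + ε else 1 : ℝ) = (k:ℝ) + ε := by
    have : ∀ i ∈ Finset.range k, (if i = 0 then 1 + ε else 1 : ℝ) =
        1 + (if i = 0 then ε else 0) := by
      intro i _; split_ifs <;> ring
    rw [Finset.sum_congr rfl this, Finset.sum_add_distrib, Finset.sum_const,
      Finset.card_range, Finset.sum_ite_eq' (Finset.range k) 0 (fun _ => ε)]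
    rw [if_pos (Finset.mem_range.2 (by omega))]
    simp
  rw [hsum3] at hsum1
  linarith

lemma wv_feasible (k : ℕ) (hk : 3 ≤ k) (e T : ℝ) (he : 0 ≤ e) (hT1 : (k:ℝ) ≤ T)
    (hT2 : e = 0 ∨ 2*(k:ℝ) - 2 + e ≤ T) :
    IsMCFlow k T (fun i => if i = 0 then 1 + e else 1) (wv k e) ∧ NoStorage k T (wv k e) := by
  have hkR : (3:ℝ) ≤ (k:ℕ) := by exact_mod_cast hk
  have hns := wv_nostorage k hk e he T
  refine ⟨⟨by linarith, fun i _ j _ => wv_integrable k e i j,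
    fun i _ j _ θ => wv_nonneg k e i j θ,
    fun i _ j hj θ hθ => wv_vanish k hk e T he hT1 hT2 i j hj θ hθ,
    fun j hj => Filter.Eventually.of_forall (wv_capacity k hk e he j hj),
    ?_, fun i hi m hm => wv_demand k hk e T he hT1 hT2 i hi m hm⟩, hns⟩
  intro i hi m hm hmi θ hθ
  by_cases hms : m = (i + k - 1) % k
  · have hs : (i + k - 1) % k = if i = 0 then k - 1 else i - 1 := by
      rw [modk k _ (by omega)]; split_ifs <;> omega
    have hmval : m = if i = 0 then k - 1 else i - 1 := by rw [hms, hs]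
    have hl'v : (m + k - i) % k = k - 1 := by
      rw [hmval]; split_ifs with h <;> rw [modk k _ (by omega)] <;> split_ifs <;> omega
    have hC2 : ¬(i = 0 ∧ m + 2 ≤ k) := by
      rintro ⟨rfl, hx⟩; rw [if_pos rfl] at hmval; omega
    rw [wv_int k (by omega) e he, wv_int k (by omega) e he, hl'v,
      if_neg (show ¬(k - 1 + 2 ≤ k) by omega), if_neg hC2, add_zero, sub_zero]
    apply add_nonneg
    · split_ifs
      · exact clamp_nonneg _ _ _ (by linarith)
      · exact le_refl 0
    · split_ifs
      · exact clamp_nonneg _ _ _ (by linarith)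
      · exact le_refl 0
  · rw [hns i hi m hm hmi hms θ hθ, sub_self]


/-- For every `k ≥ 3`, the optimal time horizon without intermediate storage, as a function of
the demand `d₀` of commodity `0`, is not continuous at `d₀ = 1`: we have `Tstar k 1 ≤ k` while
`Tstar k (1 + ε) ≥ 2k - 2` for every `ε > 0`; since `2k - 2 > k`, the function `Tstar k` is
not right-continuous at `1`. -/
theorem Tstar_not_right_continuous (k : ℕ) (hk : 3 ≤ k) :
    Tstar k 1 ≤ (k : ℝ) ∧
    (∀ ε : ℝ, 0 < ε → 2 * (k : ℝ) - 2 ≤ Tstar k (1 + ε)) ∧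
    (k : ℝ) < 2 * (k : ℝ) - 2 ∧
    ¬ ContinuousWithinAt (Tstar k) (Set.Ici 1) 1 := by
  have hkR : (3:ℝ) ≤ (k:ℕ) := by exact_mod_cast hk
  have hbdd : ∀ d₀ : ℝ, BddBelow {T : ℝ | ∃ f : ℕ → ℕ → ℝ → ℝ,
      IsMCFlow k T (fun i => if i = 0 then d₀ else 1) f ∧ NoStorage k T f} := by
    intro d₀
    refine ⟨0, fun T hT => ?_⟩
    obtain ⟨f, hf, -⟩ := hT
    exact le_of_lt hf.1
  have hupper : Tstar k 1 ≤ (k : ℝ) := by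
    apply csInf_le (hbdd 1)
    obtain ⟨hflow, hns⟩ := wv_feasible k hk 0 (k:ℝ) le_rfl le_rfl (Or.inl rfl)
    refine ⟨wv k 0, ?_, hns⟩
    have hfun : (fun i : ℕ => if i = 0 then (1:ℝ) + 0 else 1) =
        (fun i : ℕ => if i = 0 then (1:ℝ) else 1) := by
      funext i; split_ifs <;> ring
    rwa [hfun] at hflow
  have hlower : ∀ ε : ℝ, 0 < ε → 2 * (k : ℝ) - 2 ≤ Tstar k (1 + ε) := by
    intro ε hε
    apply le_csInf
    · obtain ⟨hflow, hns⟩ := wv_feasible k hk ε (2*(k:ℝ) - 2 + ε) (le_of_lt hε)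
        (by linarith) (Or.inr le_rfl)
      exact ⟨2*(k:ℝ) - 2 + ε, wv k ε, hflow, hns⟩
    · rintro T ⟨f, hf, hns⟩
      exact lower_bound k hk ε hε T f hf hns
  have hgap : (k : ℝ) < 2 * (k : ℝ) - 2 := by linarith
  refine ⟨hupper, hlower, hgap, ?_⟩
  intro hcont
  have h1 : Filter.Tendsto (Tstar k) (nhdsWithin 1 (Set.Ioi 1)) (nhds (Tstar k 1)) :=
    hcont.mono Ioi_subset_Ici_self
  have h2 : ∀ᶠ x in nhdsWithin (1:ℝ) (Set.Ioi 1), 2 * (k:ℝ) - 2 ≤ Tstar k x := by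
    apply eventually_nhdsWithin_of_forall
    intro x hx
    have hx1 : (0:ℝ) < x - 1 := by simpa [sub_pos] using hx
    have := hlower (x - 1) hx1
    rwa [show (1:ℝ) + (x - 1) = x by ring] at this
  have h3 : 2 * (k:ℝ) - 2 ≤ Tstar k 1 := ge_of_tendsto h1 h2
  linarith
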